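/- In the restricted-assignment integrality gap instance (k identical jobs with f(s) = max(2/s,1), dedicated machines i_j, a pool P of k-1 common machines, target C = 2k/(2k-1)), the fractional assignment x_{i_j,j} = k/(2k-1) and x_{i,j} = 1/(2k-1) for all i ∈ P satisfies: Σ_i x_{i,j} = 1 for each job j, and for every machine the total fractional load Σ_j 2 x_{i,j} equals C. Consequently the ratio of the optimal integral makespan (which is 2) to C tends to 2 as k → ∞. -/

import Mathlib

open Filter

theorem stmt_16 (k : ℕ) (hk : 1 ≤ k)
    (x : (Fin k ⊕ Fin (k - 1)) → Fin k → ℝ)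
    (hx : x = fun i j => Sum.elim
      (fun j' : Fin k => if j' = j then (k : ℝ) / (2 * k - 1) else 0)
      (fun _ : Fin (k - 1) => 1 / (2 * (k : ℝ) - 1)) i) :
    (∀ j : Fin k, ∑ i : Fin k ⊕ Fin (k - 1), x i j = 1) ∧
    (∀ i : Fin k ⊕ Fin (k - 1),
      ∑ j : Fin k, 2 * x i j = 2 * (k : ℝ) / (2 * k - 1)) ∧
    Tendsto (fun k : ℕ => 2 / (2 * (k : ℝ) / (2 * k - 1))) atTop (nhds 2) := by
  have hk1 : (1 : ℝ) ≤ (k : ℝ) := by exact_mod_cast hk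
  have hne : (2 * (k : ℝ) - 1) ≠ 0 := by nlinarith
  refine ⟨?_, ?_, ?_⟩
  · intro j
    subst hx
    rw [Fintype.sum_sum_type]
    simp only [Sum.elim_inl, Sum.elim_inr]
    rw [Finset.sum_ite_eq' Finset.univ j, Finset.sum_const]
    have hkm : ((k - 1 : ℕ) : ℝ) = (k : ℝ) - 1 := by
      have : (1 : ℕ) ≤ k := hk
      push_cast [Nat.cast_sub this]
      ring
    simp [Finset.card_univ, hkm]
    field_simp
    rw [div_eq_one_iff_eq (by intro h; linarith)]; ring
  · intro i
    subst hx
    cases i with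
    | inl j' =>
      simp only [Sum.elim_inl, mul_ite, mul_zero]
      rw [Finset.sum_ite_eq Finset.univ j']
      simp
      ring
    | inr p =>
      simp only [Sum.elim_inr]
      rw [Finset.sum_const, Finset.card_univ]
      simp
      field_simp
  · have h : ∀ᶠ n : ℕ in atTop, 2 - 1 / (n : ℝ) = 2 / (2 * (n : ℝ) / (2 * n - 1)) := by
      filter_upwards [eventually_ge_atTop 1] with n hn
      have hn1 : (1 : ℝ) ≤ (n : ℝ) := by exact_mod_cast hn
      have h1 : (n : ℝ) ≠ 0 := by linarith
      have h2 : (2 * (n : ℝ) - 1) ≠ 0 := by nlinarith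
      field_simp
    have : Tendsto (fun n : ℕ => 2 - 1 / (n : ℝ)) atTop (nhds 2) := by
      have := tendsto_one_div_atTop_nhds_zero_nat (𝕜 := ℝ)
      have h2 := (tendsto_const_nhds (x := (2:ℝ)) (f := atTop)).sub this
      simpa using h2
    exact this.congr' h
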